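/- arXiv:0909.4690 — 2 statements merged into one kernel-verified Lean document; each statement's English description precedes it below -/
import Mathlib

section
/- Let X be a compact complex manifold on which every global holomorphic 1-form is closed. Then the set 𝔥¹ of holomorphic vector fields v on X satisfying α(v) = 0 for every global holomorphic 1-form α is a Lie ideal of the Lie algebra 𝔥 of all holomorphic vector fields, and it contains the derived subalgebra [𝔥, 𝔥]. -/
open scoped Manifold
open Bundle

noncomputable section

/-- A holomorphic vector field on a complex manifold. -/
def IsHolVectorField {E : Type*} [NormedAddCommGroup E] [NormedSpace ℂ E]
    {H : Type*} [TopologicalSpace H] (I : ModelWithCorners ℂ E H)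
    {X : Type*} [TopologicalSpace X] [ChartedSpace H X] [IsManifold I (⊤ : ℕ∞) X]
    (v : ∀ x : X, TangentSpace I x) : Prop :=
  MDifferentiable I I.tangent (fun x => (⟨x, v x⟩ : TangentBundle I X))

/-- A holomorphic 1-form on a complex manifold. -/
def IsHolOneForm {E : Type*} [NormedAddCommGroup E] [NormedSpace ℂ E]
    {H : Type*} [TopologicalSpace H] (I : ModelWithCorners ℂ E H)
    {X : Type*} [TopologicalSpace X] [ChartedSpace H X] [IsManifold I (⊤ : ℕ∞) X]
    (α : ∀ x : X, TangentSpace I x →L[ℂ] ℂ) : Prop :=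
  MDifferentiable I.tangent 𝓘(ℂ, ℂ) (fun p : TangentBundle I X => α p.proj p.2)

/-- The derivative of a function `f : X → ℂ` along a vector field `v`. -/
def dirDeriv {E : Type*} [NormedAddCommGroup E] [NormedSpace ℂ E]
    {H : Type*} [TopologicalSpace H] (I : ModelWithCorners ℂ E H)
    {X : Type*} [TopologicalSpace X] [ChartedSpace H X] [IsManifold I (⊤ : ℕ∞) X]
    (f : X → ℂ) (v : ∀ x : X, TangentSpace I x) (x : X) : ℂ :=
  mfderiv I 𝓘(ℂ, ℂ) f x (v x)

theorem dirDeriv_eq_zero_aux {E : Type*} [NormedAddCommGroup E] [NormedSpace ℂ E]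
    {H : Type*} [TopologicalSpace H] (I : ModelWithCorners ℂ E H) [I.Boundaryless]
    {X : Type*} [TopologicalSpace X] [ChartedSpace H X] [IsManifold I (⊤ : ℕ∞) X]
    [CompactSpace X]
    (α : ∀ x : X, TangentSpace I x →L[ℂ] ℂ) (hα : IsHolOneForm I α)
    (v : ∀ x : X, TangentSpace I x) (hv : IsHolVectorField I v)
    (w : ∀ x : X, TangentSpace I x) (x : X) :
    dirDeriv I (fun y => α y (v y)) w x = 0 := by
  have hf : MDifferentiable I 𝓘(ℂ, ℂ) (fun y : X => α y (v y)) := hα.comp hv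
  have hlc : IsLocallyConstant (fun y : X => α y (v y)) := hf.isLocallyConstant
  have heq : (fun y : X => α y (v y)) =ᶠ[nhds x] fun _ => α x (v x) :=
    hlc.eventually_eq x
  have : mfderiv I 𝓘(ℂ, ℂ) (fun y : X => α y (v y)) x
      = mfderiv I 𝓘(ℂ, ℂ) (fun _ : X => α x (v x)) x := heq.mfderiv_eq
  simp [dirDeriv, this, mfderiv_const]
  rfl

/-- Let `X` be a compact complex manifold on which every global holomorphic 1-form is
closed (expressed by the Cartan formula `α([v,w]) = v(α(w)) - w(α(v))` for all global
holomorphic 1-forms `α` and holomorphic vector fields `v`, `w`, where `bkt v w = [v, w]`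
is the Lie bracket of vector fields).  Then the set `𝔥¹` of holomorphic vector fields `v`
with `α(v) = 0` for every global holomorphic 1-form `α` is a Lie ideal of the Lie algebra
`𝔥` of holomorphic vector fields, and it contains the derived subalgebra `[𝔥, 𝔥]`. -/
theorem stmt7 {E : Type*} [NormedAddCommGroup E] [NormedSpace ℂ E]
    {H : Type*} [TopologicalSpace H] (I : ModelWithCorners ℂ E H) [I.Boundaryless]
    (X : Type*) [TopologicalSpace X] [ChartedSpace H X] [IsManifold I (⊤ : ℕ∞) X]
    [CompactSpace X]
    -- the Lie bracket of vector fields on `X`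
    (bkt : (∀ x : X, TangentSpace I x) → (∀ x : X, TangentSpace I x) →
      (∀ x : X, TangentSpace I x))
    -- the bracket of holomorphic vector fields is holomorphic (`𝔥` is a Lie algebra)
    (hbkt : ∀ v w, IsHolVectorField I v → IsHolVectorField I w →
      IsHolVectorField I (bkt v w))
    -- every global holomorphic 1-form is closed: the Cartan formula for closed forms
    (hclosed : ∀ α, IsHolOneForm I α → ∀ v w, IsHolVectorField I v →
      IsHolVectorField I w → ∀ x : X,
        α x (bkt v w x)
          = dirDeriv I (fun y => α y (w y)) v x - dirDeriv I (fun y => α y (v y)) w x) :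
    -- `𝔥¹ = {v holomorphic | α(v) = 0 for all holomorphic 1-forms α}` is a Lie ideal of `𝔥`
    (∀ v w, IsHolVectorField I v →
      (IsHolVectorField I w ∧ (∀ α, IsHolOneForm I α → ∀ x : X, α x (w x) = 0)) →
      (IsHolVectorField I (bkt v w) ∧
        (∀ α, IsHolOneForm I α → ∀ x : X, α x (bkt v w x) = 0))) ∧
    -- and `𝔥¹` contains the derived subalgebra `[𝔥, 𝔥]`
    (∀ v w, IsHolVectorField I v → IsHolVectorField I w →
      (IsHolVectorField I (bkt v w) ∧
        (∀ α, IsHolOneForm I α → ∀ x : X, α x (bkt v w x) = 0))) := by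
  have key : ∀ v w, IsHolVectorField I v → IsHolVectorField I w →
      IsHolVectorField I (bkt v w) ∧
        (∀ α, IsHolOneForm I α → ∀ x : X, α x (bkt v w x) = 0) := by
    intro v w hv hw
    refine ⟨hbkt v w hv hw, fun α hα x => ?_⟩
    rw [hclosed α hα v w hv hw x, dirDeriv_eq_zero_aux I α hα w hw v x,
      dirDeriv_eq_zero_aux I α hα v hv w x, sub_zero]
  exact ⟨fun v w hv hw => key v w hv hw.1, key⟩
end
end

section
/- (Poincaré reducibility) Let A be an abelian variety over ℂ and B ⊆ A an abelian subvariety. Then there exists an abelian subvariety Z ⊆ A such that B ∩ Z is finite and B + Z = A; equivalently, the addition map B × Z → A is an isogeny. -/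
open Finset in
private lemma li_rat_to_real {n k : ℕ} (v : Fin k → (Fin n → ℚ))
    (hv : LinearIndependent ℚ v) :
    LinearIndependent ℝ (fun j => fun i => ((v j i : ℚ) : ℝ)) := by
  classical
  set U := Submodule.span ℚ (Set.range v) with hU
  let bs : Module.Basis (Fin k) ℚ U := Module.Basis.span hv
  choose gq hgq using fun j => LinearMap.exists_extend (bs.coord j)
  have hg : ∀ j t, gq j (v t) = if t = j then 1 else 0 := by
    intro j t
    have h1 : v t = U.subtype (bs t) := by
      exact congrArg Subtype.val (Module.Basis.span_apply hv t).symm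
    rw [h1, ← LinearMap.comp_apply, hgq j, Module.Basis.coord_apply, Module.Basis.repr_self,
      Finsupp.single_apply]
  let A : Matrix (Fin k) (Fin n) ℝ := fun j i => ((gq j (fun s => if i = s then 1 else 0) : ℚ) : ℝ)
  apply LinearIndependent.of_comp A.mulVecLin
  have hc : (A.mulVecLin ∘ fun j => fun i => ((v j i : ℚ) : ℝ))
      = fun t => fun j => if t = j then (1:ℝ) else 0 := by
    funext t j
    rw [Function.comp_apply, Matrix.mulVecLin_apply]
    simp only [Matrix.mulVec, dotProduct, A]
    have : ∀ i, ((gq j (fun s => if i = s then 1 else 0) : ℚ) : ℝ) * ((v t i : ℚ) : ℝ)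
        = (((v t i * gq j (fun s => if i = s then 1 else 0)) : ℚ) : ℝ) := by
      intro i; push_cast; ring
    rw [Finset.sum_congr rfl fun i _ => this i, ← Rat.cast_sum]
    have := (LinearMap.pi_apply_eq_sum_univ (gq j) (v t)).symm
    rw [show (∑ i, v t i * gq j fun s => if i = s then 1 else 0)
        = (∑ i, v t i • gq j fun s => if i = s then 1 else 0) from by simp [smul_eq_mul], this,
      hg j t]
    split <;> norm_num
  rw [hc]
  have h2 : (fun t : Fin k => fun j : Fin k => if t = j then (1:ℝ) else 0)
      = fun t => Pi.single t (1:ℝ) := by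
    funext t j; rw [Pi.single_apply]; simp [eq_comm]
  have h3 : ⇑(Pi.basisFun ℝ (Fin k)) = fun t => Pi.single t (1:ℝ) := by
    funext t; exact Pi.basisFun_apply ..
  rw [h2, ← h3]; exact (Pi.basisFun ℝ (Fin k)).linearIndependent

/-- **Poincaré reducibility**, stated at the level of lattices and complex subspaces.
An abelian variety is `A = V/Λ` where `V = ℂ^g`, `Λ` is a lattice (the `ℤ`-span of an
`ℝ`-basis of `V`), together with a polarization: a positive definite hermitian form `Hm`
on `V` whose imaginary part is integer valued on `Λ`.  An abelian subvariety `B ⊆ A`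
corresponds to a complex subspace `W ⊆ V` with `W = spanℝ(W ∩ Λ)` (so `W ∩ Λ` is a lattice
of `W` and `B = W/(W ∩ Λ)`).  The theorem asserts the existence of a complementary abelian
subvariety `Z = W'/(W' ∩ Λ)`: a complex subspace `W'` defined over the lattice with
`W ∩ W' = 0` and `W + W' = V`; equivalently `B ∩ Z` is finite, `B + Z = A`, and the
addition map `B × Z → A` is an isogeny. -/
theorem stmt17 (g : ℕ)
    (b : Module.Basis (Fin (2 * g)) ℝ (Fin g → ℂ))
    (Λ : AddSubgroup (Fin g → ℂ)) (hΛ : Λ = AddSubgroup.closure (Set.range b))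
    (Hm : (Fin g → ℂ) →ₗ⋆[ℂ] ((Fin g → ℂ) →ₗ[ℂ] ℂ))
    (hsymm : ∀ v w : Fin g → ℂ, Hm w v = starRingEnd ℂ (Hm v w))
    (hpos : ∀ v : Fin g → ℂ, v ≠ 0 → 0 < (Hm v v).re)
    (hint : ∀ x ∈ Λ, ∀ y ∈ Λ, ∃ m : ℤ, (Hm x y).im = m)
    (W : Submodule ℂ (Fin g → ℂ))
    (hW : Submodule.span ℝ ((W : Set (Fin g → ℂ)) ∩ (Λ : Set (Fin g → ℂ)))
      = W.restrictScalars ℝ) :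
    ∃ W' : Submodule ℂ (Fin g → ℂ),
      Submodule.span ℝ ((W' : Set (Fin g → ℂ)) ∩ (Λ : Set (Fin g → ℂ)))
        = W'.restrictScalars ℝ ∧
      W ⊓ W' = ⊥ ∧ W ⊔ W' = ⊤ := by
  classical
  have hmemΛ : ∀ x, x ∈ Λ ↔ x ∈ Submodule.span ℤ (Set.range b) := by
    intro x
    rw [hΛ, ← Submodule.span_int_eq_addSubgroupClosure]
    exact Iff.rfl
  have hbmem : ∀ i, b i ∈ Λ := fun i => (hmemΛ _).2 (Submodule.subset_span ⟨i, rfl⟩)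
  choose M hM using fun i j => hint (b i) (hbmem i) (b j) (hbmem j)
  have hsm : ∀ (a : ℚ) (x : Fin g → ℂ), a • x = (a : ℝ) • x :=
    fun a x => (Rat.cast_smul_eq_qsmul ℝ a x).symm
  -- the rational points map
  let eQ : (Fin (2 * g) → ℚ) →ₗ[ℚ] (Fin g → ℂ) :=
    { toFun := fun q => ∑ i, (q i : ℝ) • b i
      map_add' := by
        intro p q
        rw [← Finset.sum_add_distrib]
        refine Finset.sum_congr rfl fun i _ => ?_
        have : ((p i + q i : ℚ) : ℝ) = (p i : ℝ) + (q i : ℝ) := by push_cast; ring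
        rw [Pi.add_apply, this, add_smul]
      map_smul' := by
        intro a q
        simp only [RingHom.id_apply]
        rw [hsm, Finset.smul_sum]
        refine Finset.sum_congr rfl fun i _ => ?_
        rw [smul_smul, Pi.smul_apply, smul_eq_mul]
        congr 1
        push_cast; ring }
  have heQapp : ∀ q, eQ q = ∑ i, (q i : ℝ) • b i := fun _ => rfl
  -- linear independence transfer
  have hLI : ∀ {m : ℕ} (u : Fin m → (Fin (2 * g) → ℚ)), LinearIndependent ℚ u →
      LinearIndependent ℝ (fun j => eQ (u j)) := by
    intro m u hu
    have h1 := li_rat_to_real u hu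
    have h2 := h1.map' b.equivFun.symm.toLinearMap b.equivFun.symm.ker
    have h3 : (⇑b.equivFun.symm.toLinearMap ∘ fun j => fun i => ((u j i : ℚ) : ℝ))
        = fun j => eQ (u j) := by
      funext j
      simp only [Function.comp_apply, LinearEquiv.coe_coe, Module.Basis.equivFun_symm_apply, heQapp]
    rwa [h3] at h2
  -- spans of images of rational subspaces
  have hspanU : ∀ (U : Submodule ℚ (Fin (2 * g) → ℚ)) {m : ℕ} (u : Fin m → (Fin (2 * g) → ℚ)),
      Submodule.span ℚ (Set.range u) = U →
      Submodule.span ℝ (eQ '' U) = Submodule.span ℝ (Set.range fun j => eQ (u j)) := by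
    intro U m u hu
    apply le_antisymm
    · rw [Submodule.span_le]
      rintro x ⟨q, hqU, rfl⟩
      rw [← hu] at hqU
      obtain ⟨c, hc⟩ := (Submodule.mem_span_range_iff_exists_fun ℚ).1 hqU
      rw [← hc, map_sum]
      refine Submodule.sum_mem _ fun j _ => ?_
      rw [map_smul, hsm]
      exact Submodule.smul_mem _ _ (Submodule.subset_span ⟨j, rfl⟩)
    · rw [Submodule.span_le]
      rintro x ⟨j, rfl⟩
      exact Submodule.subset_span ⟨u j, hu ▸ Submodule.subset_span ⟨j, rfl⟩, rfl⟩
  -- the rational form of W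
  let Wq : Submodule ℚ (Fin (2 * g) → ℚ) := (W.restrictScalars ℚ).comap eQ
  have hWr : Submodule.span ℝ (eQ '' Wq) = W.restrictScalars ℝ := by
    apply le_antisymm
    · rw [Submodule.span_le]
      rintro x ⟨q, hq, rfl⟩
      exact hq
    · rw [← hW, Submodule.span_le]
      rintro x ⟨hxW, hxΛ⟩
      obtain ⟨c, hc⟩ := (Submodule.mem_span_range_iff_exists_fun ℤ).1 ((hmemΛ x).1 hxΛ)
      have hx : eQ (fun i => (c i : ℚ)) = x := by
        rw [← hc, heQapp]
        refine Finset.sum_congr rfl fun i _ => ?_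
        rw [show (((c i : ℚ)) : ℝ) = ((c i : ℤ) : ℝ) from by push_cast; ring,
          Int.cast_smul_eq_zsmul]
      refine Submodule.subset_span ⟨_, ?_, hx⟩
      show eQ _ ∈ W.restrictScalars ℚ
      rw [hx]; exact hxW
  set k := Module.finrank ℚ Wq with hkdef
  let bw := Module.finBasis ℚ Wq
  let w : Fin k → (Fin (2 * g) → ℚ) := fun j => (bw j : Fin (2 * g) → ℚ)
  have hw_li : LinearIndependent ℚ w := bw.linearIndependent.map' Wq.subtype Wq.ker_subtype
  have hw_span : Submodule.span ℚ (Set.range w) = Wq := by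
    have h1 : Set.range w = Wq.subtype '' (Set.range bw) := by
      rw [← Set.range_comp]; rfl
    rw [h1, Submodule.span_image, bw.span_eq, Submodule.map_subtype_top]
  have hWr2 : W.restrictScalars ℝ = Submodule.span ℝ (Set.range fun j => eQ (w j)) := by
    rw [← hWr, hspanU Wq w hw_span]
  have hfinW : Module.finrank ℝ (W.restrictScalars ℝ) = k := by
    rw [hWr2, finrank_span_eq_card (hLI w hw_li), Fintype.card_fin]
  have hn : Module.finrank ℝ (Fin g → ℂ) = 2 * g := by
    rw [Module.finrank_eq_card_basis b, Fintype.card_fin]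
  -- the sesquilinear computation
  have hcomp : ∀ p q : Fin (2 * g) → ℚ,
      Hm (eQ p) (eQ q) = ∑ s, ∑ t, ((p s * q t : ℚ) : ℂ) * Hm (b s) (b t) := by
    intro p q
    have h1 : ∀ r : Fin (2 * g) → ℚ, eQ r = ∑ s, ((r s : ℚ) : ℂ) • b s := by
      intro r
      rw [heQapp]
      refine Finset.sum_congr rfl fun s _ => ?_
      rw [Rat.cast_smul_eq_qsmul, Rat.cast_smul_eq_qsmul]
    rw [h1 p, map_sum, LinearMap.sum_apply]
    refine Finset.sum_congr rfl fun s _ => ?_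
    rw [LinearMap.map_smulₛₗ, LinearMap.smul_apply, h1 q, map_sum, Finset.smul_sum]
    refine Finset.sum_congr rfl fun t _ => ?_
    rw [map_smul, smul_smul, smul_eq_mul,
      show (starRingEnd ℂ) ((p s : ℚ) : ℂ) = ((p s : ℚ) : ℂ) from map_ratCast _ _]
    push_cast
    ring
  have him : ∀ p q : Fin (2 * g) → ℚ,
      (Hm (eQ p) (eQ q)).im = ((∑ s, ∑ t, p s * q t * (M s t : ℚ) : ℚ) : ℝ) := by
    intro p q
    rw [hcomp, Complex.im_sum]
    rw [show ((∑ s, ∑ t, p s * q t * (M s t : ℚ) : ℚ) : ℝ)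
        = ∑ s, ∑ t, ((p s * q t * (M s t : ℚ) : ℚ) : ℝ) from by push_cast; rfl]
    refine Finset.sum_congr rfl fun s _ => ?_
    rw [Complex.im_sum]
    refine Finset.sum_congr rfl fun t _ => ?_
    rw [show ((p s * q t : ℚ) : ℂ) * Hm (b s) (b t)
        = (((p s * q t : ℚ) : ℝ) : ℂ) * Hm (b s) (b t) from by norm_cast,
      Complex.im_ofReal_mul, hM s t]
    push_cast; ring
  -- the orthogonal complement over ℚ
  let A : Matrix (Fin k) (Fin (2 * g)) ℚ := fun j t => ∑ s, w j s * (M s t : ℚ)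
  let Φ := A.mulVecLin
  let Zq := LinearMap.ker Φ
  have hΦ : ∀ q j, Φ q j = ∑ s, ∑ t, w j s * q t * (M s t : ℚ) := by
    intro q j
    show ∑ t, A j t * q t = _
    have h1 : ∀ t, A j t * q t = ∑ s, w j s * q t * (M s t : ℚ) := by
      intro t
      show (∑ s, w j s * (M s t : ℚ)) * q t = _
      rw [Finset.sum_mul]
      exact Finset.sum_congr rfl fun s _ => by ring
    rw [Finset.sum_congr rfl fun t _ => h1 t, Finset.sum_comm]
  -- dimension of the kernel
  set m := Module.finrank ℚ Zq with hmdef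
  have hm_ge : 2 * g ≤ m + k := by
    have h1 := LinearMap.finrank_range_add_finrank_ker Φ
    have h2 : Module.finrank ℚ (LinearMap.range Φ) ≤ k := by
      refine le_trans (Submodule.finrank_le _) ?_
      rw [Module.finrank_fintype_fun_eq_card, Fintype.card_fin]
    rw [Module.finrank_fintype_fun_eq_card, Fintype.card_fin] at h1
    have h3 : m = Module.finrank ℚ (LinearMap.ker Φ) := rfl
    omega
  -- the orthogonal complement of W with respect to Hm
  let O : Submodule ℂ (Fin g → ℂ) := ⨅ v : W, LinearMap.ker (Hm v)
  have hOmem : ∀ x, x ∈ O ↔ ∀ v ∈ W, Hm v x = 0 := by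
    intro x
    simp only [O, Submodule.mem_iInf, LinearMap.mem_ker, Subtype.forall]
  have hWO : W ⊓ O = ⊥ := by
    rw [eq_bot_iff]
    rintro v hv
    obtain ⟨hv1, hv2⟩ := Submodule.mem_inf.1 hv
    rw [Submodule.mem_bot]
    by_contra h
    have h0 := (hOmem v).1 hv2 v hv1
    have hp := hpos v h
    rw [h0] at hp
    simp at hp
  -- elements coming from the rational kernel land in O
  have hZO : ∀ p ∈ Zq, eQ p ∈ O := by
    intro p hp
    rw [hOmem]
    have hker : ∀ y ∈ Wq, (∑ s, ∑ t, y s * p t * (M s t : ℚ)) = 0 := by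
      intro y hy
      rw [← hw_span] at hy
      induction hy using Submodule.span_induction with
      | mem u hu =>
        obtain ⟨j, rfl⟩ := hu
        have h0 : Φ p = 0 := hp
        have := congrFun h0 j
        rw [hΦ p j] at this
        exact this
      | zero => simp
      | add u u' hu hu' ihu ihu' =>
        simp only [Pi.add_apply, add_mul, Finset.sum_add_distrib] at *
        rw [ihu, ihu', add_zero]
      | smul c u hu ihu =>
        simp only [Pi.smul_apply, smul_eq_mul, mul_assoc, ← Finset.mul_sum] at *
        rw [ihu, mul_zero]
    have hS : ∀ v ∈ W.restrictScalars ℝ, (Hm v (eQ p)).im = 0 := by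
      intro v hv
      rw [← hWr] at hv
      induction hv using Submodule.span_induction with
      | mem u hu =>
        obtain ⟨y, hy, rfl⟩ := hu
        rw [him y p, hker y hy]
        norm_num
      | zero => simp
      | add u u' hu hu' ihu ihu' =>
        rw [map_add, LinearMap.add_apply, Complex.add_im, ihu, ihu', add_zero]
      | smul c u hu ihu =>
        rw [show c • u = ((c : ℂ)) • u from by
            rw [← algebraMap_smul ℂ c u, Complex.coe_algebraMap],
          LinearMap.map_smulₛₗ, LinearMap.smul_apply, smul_eq_mul, Complex.conj_ofReal,
          Complex.im_ofReal_mul, ihu, mul_zero]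
    intro v hv
    have h1 : (Hm v (eQ p)).im = 0 := hS v hv
    have h2 : (Hm (Complex.I • v) (eQ p)).im = 0 := hS _ (W.smul_mem Complex.I hv)
    have h3 : Hm (Complex.I • v) (eQ p) = -Complex.I * Hm v (eQ p) := by
      rw [LinearMap.map_smulₛₗ, LinearMap.smul_apply, smul_eq_mul, Complex.conj_I]
    apply Complex.ext
    · rw [h3, Complex.mul_im] at h2
      simp only [Complex.neg_re, Complex.I_re, Complex.neg_im, Complex.I_im, neg_zero,
        zero_mul, neg_mul, one_mul, zero_add] at h2
      simpa using neg_eq_zero.1 h2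
    · simpa using h1
  -- rational basis of the kernel
  let bz := Module.finBasis ℚ Zq
  let z : Fin m → (Fin (2 * g) → ℚ) := fun j => (bz j : Fin (2 * g) → ℚ)
  have hz_li : LinearIndependent ℚ z := bz.linearIndependent.map' Zq.subtype Zq.ker_subtype
  have hz_span : Submodule.span ℚ (Set.range z) = Zq := by
    have h1 : Set.range z = Zq.subtype '' (Set.range bz) := by
      rw [← Set.range_comp]; rfl
    rw [h1, Submodule.span_image, bz.span_eq, Submodule.map_subtype_top]
  have hZr : Submodule.span ℝ (eQ '' Zq) = Submodule.span ℝ (Set.range fun j => eQ (z j)) :=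
    hspanU Zq z hz_span
  have hfinZ : Module.finrank ℝ (Submodule.span ℝ (eQ '' Zq)) = m := by
    rw [hZr, finrank_span_eq_card (hLI z hz_li), Fintype.card_fin]
  have hZle : Submodule.span ℝ (eQ '' Zq) ≤ O.restrictScalars ℝ := by
    rw [Submodule.span_le]
    rintro x ⟨q, hq, rfl⟩
    exact hZO q hq
  have hinf : (W.restrictScalars ℝ) ⊓ (O.restrictScalars ℝ) = ⊥ := by
    rw [eq_bot_iff]
    intro v hv
    have h1 : v ∈ W ⊓ O := Submodule.mem_inf.2 ⟨hv.1, hv.2⟩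
    rw [hWO] at h1
    exact h1
  have hsupfin := Submodule.finrank_sup_add_finrank_inf_eq
    (W.restrictScalars ℝ) (O.restrictScalars ℝ)
  rw [hinf, finrank_bot, hfinW] at hsupfin
  have hsuple : Module.finrank ℝ ↥((W.restrictScalars ℝ) ⊔ (O.restrictScalars ℝ))
      ≤ 2 * g := by
    rw [← hn]; exact Submodule.finrank_le _
  have hObound : Module.finrank ℝ (O.restrictScalars ℝ) + k ≤ 2 * g := by omega
  have hOeq : Submodule.span ℝ (eQ '' Zq) = O.restrictScalars ℝ := by
    apply Submodule.eq_of_le_of_finrank_le hZle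
    rw [hfinZ]; omega
  have hfinO : Module.finrank ℝ (O.restrictScalars ℝ) = m := by
    rw [← hOeq, hfinZ]
  -- the sum is everything
  have hsup : W ⊔ O = ⊤ := by
    rw [← Submodule.restrictScalars_eq_top_iff (S := ℝ)]
    apply Submodule.eq_top_of_finrank_eq
    have hle : (W.restrictScalars ℝ) ⊔ (O.restrictScalars ℝ)
        ≤ (W ⊔ O).restrictScalars ℝ := by
      apply sup_le
      · intro x hx; exact Submodule.mem_sup_left hx
      · intro x hx; exact Submodule.mem_sup_right hx
    have h1 : Module.finrank ℝ ↥((W.restrictScalars ℝ) ⊔ (O.restrictScalars ℝ))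
        ≤ Module.finrank ℝ ↥((W ⊔ O).restrictScalars ℝ) := Submodule.finrank_mono hle
    have h2 : Module.finrank ℝ ↥((W ⊔ O).restrictScalars ℝ) ≤ 2 * g := by
      rw [← hn]; exact Submodule.finrank_le _
    rw [hn]
    omega
  -- rationality of O
  have hrat : Submodule.span ℝ ((O : Set (Fin g → ℂ)) ∩ (Λ : Set (Fin g → ℂ)))
      = O.restrictScalars ℝ := by
    apply le_antisymm
    · rw [Submodule.span_le]
      rintro x ⟨hx1, _⟩
      exact hx1
    · rw [← hOeq, Submodule.span_le]
      rintro _ ⟨p, hp, rfl⟩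
      set N : ℕ := ∏ i, (p i).den with hNdef
      have hN0 : (N : ℚ) ≠ 0 := by
        rw [hNdef]
        push_cast
        exact Finset.prod_ne_zero_iff.2 fun i _ => by exact_mod_cast (p i).den_ne_zero
      have hint' : ∀ i, ∃ mi : ℤ, ((N : ℚ)) * p i = mi := by
        intro i
        obtain ⟨c, hc⟩ := Finset.dvd_prod_of_mem (fun i => (p i).den) (Finset.mem_univ i)
        refine ⟨(c : ℤ) * (p i).num, ?_⟩
        have hNc : (N : ℚ) = (c : ℚ) * ((p i).den : ℚ) := by
          rw [hNdef, hc]; push_cast; ring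
        rw [hNc, mul_assoc, Rat.den_mul_eq_num]
        push_cast; ring
      choose mi hmi using hint'
      have hNs : (N : ℝ) • eQ p = ∑ i, (mi i : ℝ) • b i := by
        rw [heQapp, Finset.smul_sum]
        refine Finset.sum_congr rfl fun i _ => ?_
        rw [smul_smul]
        congr 1
        rw [show ((mi i : ℤ) : ℝ) = (((mi i : ℤ) : ℚ) : ℝ) from by push_cast; ring, ← hmi i]
        push_cast; ring
      have hNmem : (N : ℝ) • eQ p ∈ (O : Set (Fin g → ℂ)) ∩ (Λ : Set (Fin g → ℂ)) := by
        constructor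
        · exact (O.restrictScalars ℝ).smul_mem _ (hZO p hp)
        · show (N : ℝ) • eQ p ∈ Λ
          rw [hmemΛ, hNs]
          refine Submodule.sum_mem _ fun i _ => ?_
          rw [Int.cast_smul_eq_zsmul]
          exact Submodule.smul_mem _ _ (Submodule.subset_span ⟨i, rfl⟩)
      have hN0' : (N : ℝ) ≠ 0 := by exact_mod_cast hN0
      have hx : eQ p = ((N : ℝ))⁻¹ • ((N : ℝ) • eQ p) := by
        rw [smul_smul, inv_mul_cancel₀ hN0', one_smul]
      rw [hx]
      exact Submodule.smul_mem _ _ (Submodule.subset_span hNmem)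
  exact ⟨O, hrat, hWO, hsup⟩
end
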